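/- Let p be an odd prime, q a power of p, and n a nonnegative even integer with p not dividing n. If x \mapsto F_n(1,x) is a bijection of F_q, then n \equiv 0 (mod 4) and gcd(\lfloor (n-1)/2 \rfloor, q-1) = 1. -/

import Mathlib

def F3 {K : Type*} [Field K] (x : K) : ℕ → K
  | 0 => 0
  | 1 => 1
  | (n + 2) => F3 x (n + 1) - x * F3 x n

section Aux
variable {K : Type*} [Field K]

lemma F3_step4 (x : K) (k : ℕ) :
    F3 x (k+4) = (1 - 2*x) * F3 x (k+2) - x^2 * F3 x k := by
  show F3 x (k+2+2) = _
  rw [show k+2+2 = (k+1)+1+2 from rfl]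
  simp only [F3]
  ring

lemma F3_recip (x y : K) (h : y * (1 - 4*x) = -x) (k : ℕ) :
    (1 - 4*x)^k * F3 y (2*k) = (1 - 4*x) * F3 x (2*k) := by
  induction k using Nat.twoStepInduction with
  | zero => simp [F3]
  | one => norm_num [F3]
  | more k ih1 ih2 =>
    have e1 : 2*(k+2) = 2*k+4 := by ring
    have e2 : 2*(k+1) = 2*k+2 := by ring
    rw [e2] at ih2
    rw [e1, F3_step4, F3_step4]
    have hu1 : (1-4*x)^2 * (1 - 2*y) = (1-4*x) * (1 - 2*x) := by
      linear_combination (-2*(1-4*x)) * h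
    have hu2 : ((1-4*x) * y)^2 = x^2 := by
      linear_combination (y*(1-4*x) - x) * h
    linear_combination ((1-4*x)*(1-2*y))*ih2 + (F3 x (2*k+2))*hu1
      - ((1-4*x)^2*y^2)*ih1 - ((1-4*x)*(F3 x (2*k)))*hu2

lemma F3_zero (k : ℕ) : F3 (0:K) (k+1) = 1 := by
  induction k using Nat.twoStepInduction with
  | zero => rfl
  | one => norm_num [F3]
  | more k ih1 ih2 => rw [show k+2+1 = k+1+2 from rfl]; simp [F3, ih1, ih2]

variable {K : Type*} [Field K]

lemma F3_half (h2 : (2:K) ≠ 0) (j : ℕ) : F3 (2⁻¹:K) (2*(2*j+1)) = (-(4⁻¹:K))^j := by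
  induction j with
  | zero => norm_num [F3]
  | succ j ih =>
    rw [show 2*(2*(j+1)+1) = 2*(2*j+1)+4 by ring, F3_step4, ih]
    have h : (1 - 2 * (2⁻¹:K)) = 0 := by rw [mul_inv_cancel₀ h2, sub_self]
    have h4 : (4:K) = 2^2 := by norm_num
    rw [h]
    field_simp
    have h4' : (4:K) ≠ 0 := by rw [h4]; exact pow_ne_zero _ h2
    linear_combination ((4:K)⁻¹ ^ j * (-1) ^ j) * (inv_mul_cancel₀ h4')

lemma F3_quarter (h2 : (2:K) ≠ 0) (k : ℕ) :
    F3 ((4⁻¹:K)) (2*k) = (k : K) * (4⁻¹:K)^k * 4 := by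
  have h4 : (4:K) ≠ 0 := by
    intro h; apply h2; have : (4:K) = 2*2 := by norm_num
    rw [this] at h; rcases mul_eq_zero.1 h with h|h <;> exact h
  induction k using Nat.twoStepInduction with
  | zero => simp [F3]
  | one => norm_num [F3]; field_simp
  | more k ih1 ih2 =>
    rw [show 2*(k+2) = 2*k+4 by ring, F3_step4, show 2*(k+1) = 2*k+2 from by ring] at *
    rw [ih2, ih1]
    push_cast
    field_simp
    linear_combination (-(k:K)*(4:K)⁻¹^k*(4*(4:K)⁻¹-1) - 8*(4:K)⁻¹*(4:K)⁻¹^k) * mul_inv_cancel₀ h4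
end Aux
theorem stmt16 {K : Type*} [Field K] [Fintype K] (p : ℕ) (hp : p.Prime) (hodd : p ≠ 2)
    [CharP K p] (n : ℕ) (hn : Even n) (hpn : ¬ p ∣ n)
    (hbij : Function.Bijective (fun x : K => F3 x n)) :
    n % 4 = 0 ∧ Nat.gcd ((n - 1) / 2) (Fintype.card K - 1) = 1 := by
  have h2 : (2:K) ≠ 0 := by
    intro h
    exact hodd ((Nat.prime_dvd_prime_iff_eq hp Nat.prime_two).1
      ((CharP.cast_eq_zero_iff K p 2).1 (by exact_mod_cast h)))
  have h4 : (4:K) ≠ 0 := by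
    intro h; apply h2
    have h' : (2:K)*2 = 0 := by linear_combination h
    rcases mul_eq_zero.1 h' with h|h <;> exact h
  obtain ⟨m, rfl⟩ := hn
  have hmm : m + m = 2*m := by ring
  rw [hmm] at hbij hpn ⊢
  have hm0 : m ≠ 0 := by rintro rfl; exact hpn (by simp)
  have hpm : ¬ p ∣ m := fun h => hpn (h.mul_left 2)
  -- the fixed point analysis
  have fixed : ∀ x : K, x * (1 - 4*x) = -x → x = 0 ∨ x = 2⁻¹ := by
    intro x hx
    rcases mul_eq_zero.1 (show x * (2 - 4*x) = 0 by linear_combination hx) with h|h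
    · exact Or.inl h
    · right
      have ha : (2:K) * (2*x) = 2*1 := by linear_combination -h
      have hb : (2:K)*x = 1 := mul_left_cancel₀ h2 ha
      have h' : (2:K)*x = 2*2⁻¹ := by rw [mul_inv_cancel₀ h2, hb]
      exact mul_left_cancel₀ h2 h'
  -- values at special points are nonzero
  have hval0 : ∀ k : ℕ, k ≠ 0 → F3 (0:K) (2*k) ≠ 0 := by
    intro k hk
    obtain ⟨l, rfl⟩ : ∃ l, k = l + 1 := ⟨k - 1, by omega⟩
    rw [show 2*(l+1) = 2*l+1+1 by ring, F3_zero]; exact one_ne_zero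
  have hvalq : F3 ((4⁻¹:K)) (2*m) ≠ 0 := by
    rw [F3_quarter h2]
    refine mul_ne_zero (mul_ne_zero ?_ (pow_ne_zero _ (inv_ne_zero h4))) h4
    intro h; exact hpm ((CharP.cast_eq_zero_iff K p m).1 h)
  -- Step 1 : m is even
  have hmeven : Even m := by
    by_contra hodd'
    obtain ⟨j, rfl⟩ := Nat.not_even_iff_odd.1 hodd'
    obtain ⟨x₀, hx₀⟩ := hbij.surjective 0
    have hx₀ : F3 x₀ (2*(2*j+1)) = 0 := hx₀
    by_cases hu : (1:K) - 4*x₀ = 0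
    · have hxq : x₀ = 4⁻¹ := by field_simp; linear_combination -hu
      rw [hxq] at hx₀; exact hvalq hx₀
    · have hrel : (-x₀/(1-4*x₀)) * (1 - 4*x₀) = -x₀ := div_mul_cancel₀ _ hu
      have hkey := F3_recip x₀ _ hrel (2*j+1)
      rw [hx₀, mul_zero] at hkey
      have hy0 : F3 (-x₀/(1-4*x₀)) (2*(2*j+1)) = 0 := by
        rcases mul_eq_zero.1 hkey with h|h
        · exact absurd h (pow_ne_zero _ hu)
        · exact h
      have hyx : (-x₀/(1-4*x₀)) = x₀ := hbij.injective (show F3 _ (2*(2*j+1)) = F3 _ (2*(2*j+1)) by rw [hy0, hx₀])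
      rw [hyx] at hrel
      rcases fixed x₀ hrel with h|h
      · rw [h] at hx₀; exact hval0 _ hm0 hx₀
      · rw [h, F3_half h2 j] at hx₀
        exact pow_ne_zero _ (neg_ne_zero.2 (inv_ne_zero h4)) hx₀
  obtain ⟨l, rfl⟩ := hmeven
  have hl0 : l ≠ 0 := by rintro rfl; exact hm0 rfl
  refine ⟨by omega, ?_⟩
  -- gcd part
  rw [show (2*(l+l) - 1)/2 = l + l - 1 by omega]
  by_contra hd
  have hr : (Nat.gcd (l + l - 1) (Fintype.card K - 1)).minFac.Prime := Nat.minFac_prime hd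
  set r := (Nat.gcd (l + l - 1) (Fintype.card K - 1)).minFac with hrr
  have hrd1 : r ∣ l + l - 1 := (Nat.minFac_dvd _).trans (Nat.gcd_dvd_left _ _)
  have hrd2 : r ∣ Fintype.card K - 1 := (Nat.minFac_dvd _).trans (Nat.gcd_dvd_right _ _)
  have hrodd : r ≠ 2 := by intro h; rw [h] at hrd1; omega
  haveI : Fact r.Prime := ⟨hr⟩
  haveI : Fintype Kˣ := Fintype.ofFinite _
  have hcard : r ∣ Fintype.card Kˣ := by
    rw [← Nat.card_eq_fintype_card, Nat.card_units, Nat.card_eq_fintype_card]; exact hrd2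
  obtain ⟨g, hg⟩ := exists_prime_orderOf_dvd_card (G := Kˣ) r hcard
  have ha0 : (g:K) ≠ 0 := g.ne_zero
  have hane1 : (g:K) ≠ 1 := by
    intro h
    have hg1 : g = 1 := Units.ext (by rw [Units.val_one]; exact h)
    rw [hg1, orderOf_one] at hg
    exact absurd hg.symm hr.one_lt.ne'
  have hane1' : (g:K) ≠ -1 := by
    intro h
    have hg2 : g^2 = 1 := Units.ext (by push_cast; rw [h]; ring)
    have hdvd := orderOf_dvd_of_pow_eq_one hg2
    rw [hg] at hdvd
    have := Nat.le_of_dvd (by norm_num) hdvd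
    have := hr.two_le
    omega
  have hpowu : g ^ (l + l - 1) = 1 := orderOf_dvd_iff_pow_eq_one.1 (hg ▸ hrd1)
  have hpow : (g:K) ^ (l + l - 1) = 1 := by
    rw [← Units.val_pow_eq_pow_val, hpowu]; simp
  -- take x with 1 - 4x = a
  set x : K := (1 - (g:K)) * 4⁻¹ with hx
  have hux : (1:K) - 4*x = (g:K) := by
    rw [hx]
    have h44 : (4:K)*4⁻¹ = 1 := mul_inv_cancel₀ h4
    linear_combination (-(1 - (g:K))) * h44
  have hrel : (-x/(g:K)) * (1 - 4*x) = -x := by rw [hux]; exact div_mul_cancel₀ _ ha0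
  have hkey := F3_recip x _ hrel (l + l)
  rw [hux] at hkey
  have ham : (g:K) ^ (l + l) = (g:K) := by
    rw [show l + l = (l + l - 1) + 1 by omega, pow_succ, hpow, one_mul]
  rw [ham] at hkey
  have heq : F3 (-x/(g:K)) (2*(l+l)) = F3 x (2*(l+l)) := mul_left_cancel₀ ha0 hkey
  have hyx : (-x/(g:K)) = x := hbij.injective heq
  rw [hyx] at hrel
  rcases fixed x hrel with h|h
  · apply hane1; rw [h] at hux; simpa using hux.symm
  · apply hane1'
    rw [h] at hux
    have h42 : (4:K) * 2⁻¹ = 2 := by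
      rw [show (4:K) = 2*2 by norm_num, mul_assoc, mul_inv_cancel₀ h2, mul_one]
    linear_combination -hux - h42
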